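/- A partitioned formula φ(x;y) has the strict-order property in a complete first-order theory T if and only if for every n<ω the formula φ exhibits in T the n-pattern (C_n, I_n), where C_n = {({i+1}, {i}) : i<n−1} and I_n = {({i}, {i+1}) : i<n−1}. -/

import Mathlib

open FirstOrder Language Set

universe u v w

/-- A partitioned formula `φ(x;y)` (object variables `α`, parameter variables `β`)
exhibits the pattern `(C, I)` (indexed by `S`) in the theory `T`. -/
def ExhibitsPattern {L : FirstOrder.Language.{u, v}} (T : L.Theory) {α β S : Type*}
    (φ : L.Formula (α ⊕ β)) (C I : Set (Set S × Set S)) : Prop :=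
  ∃ (M : Theory.ModelType.{u, v, w} T) (b : S → β → M),
    (∀ p ∈ C, ∃ a : α → M,
      (∀ i ∈ p.1, φ.Realize (Sum.elim a (b i))) ∧
      (∀ j ∈ p.2, ¬ φ.Realize (Sum.elim a (b j)))) ∧
    (∀ p ∈ I, ¬ ∃ a : α → M,
      (∀ i ∈ p.1, φ.Realize (Sum.elim a (b i))) ∧
      (∀ j ∈ p.2, ¬ φ.Realize (Sum.elim a (b j))))

/-- `(C, I)` is a pattern: the condition `(∅, ∅)` is excluded. -/
def IsPattern {S : Type*} (C I : Set (Set S × Set S)) : Prop :=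
  (∅, ∅) ∉ C ∧ (∅, ∅) ∉ I

/-- A pattern is exhibitable if some partitioned formula of some complete
first-order theory exhibits it. -/
def Exhibitable {S : Type*} (C I : Set (Set S × Set S)) : Prop :=
  ∃ (L : FirstOrder.Language.{0, 0}) (T : L.Theory) (_ : T.IsComplete) (α β : Type)
    (φ : L.Formula (α ⊕ β)), ExhibitsPattern.{0, 0, 0} T φ C I

/-- `φ(x;y)` has the strict-order property in `T`. -/
def HasSOP {L : FirstOrder.Language.{u, v}} (T : L.Theory) {α β : Type*}
    (φ : L.Formula (α ⊕ β)) : Prop :=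
  ∃ (M : Theory.ModelType.{u, v, w} T) (b : ℕ → β → M),
    ∀ i j : ℕ,
      (∃ a : α → M, φ.Realize (Sum.elim a (b j)) ∧ ¬ φ.Realize (Sum.elim a (b i))) ↔ i < j

section Aux

open Filter

variable {L : FirstOrder.Language.{u, v}} {α β : Type*} (φ : L.Formula (α ⊕ β))

/-- Łoś's theorem specialized to `Sum.elim` valuations. -/
theorem elim_realize_cast {M : ℕ → Type w} [∀ n, L.Structure (M n)] [∀ n, Nonempty (M n)]
    (uu : Ultrafilter ℕ) (A : α → ∀ n, M n) (B : β → ∀ n, M n) :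
    φ.Realize (Sum.elim (fun x => (↑(A x) : (uu : Filter ℕ).Product M))
        (fun y => (↑(B y) : (uu : Filter ℕ).Product M))) ↔
      ∀ᶠ n in uu, φ.Realize (Sum.elim (fun x => A x n) (fun y => B y n)) := by
  have := Ultraproduct.realize_formula_cast (u := uu) φ (Sum.elim A B)
  have h1 : (fun s => (↑(Sum.elim A B s) : (uu : Filter ℕ).Product M)) =
      Sum.elim (fun x => (↑(A x) : (uu : Filter ℕ).Product M))
        (fun y => (↑(B y) : (uu : Filter ℕ).Product M)) := by
    funext s; cases s <;> rfl
  have h2 : ∀ n, (fun s => Sum.elim A B s n) =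
      Sum.elim (fun x => A x n) (fun y => B y n) := by
    intro n; funext s; cases s <;> rfl
  rw [h1] at this
  simp only [h2] at this
  exact this

end Aux

theorem strict_order_property_iff_exhibits_patterns
    {L : FirstOrder.Language.{u, v}} (T : L.Theory) (hT : T.IsComplete)
    {α β : Type*} (φ : L.Formula (α ⊕ β)) :
    HasSOP.{u, v, w} T φ ↔
      ∀ n : ℕ, ExhibitsPattern.{u, v, w} T φ
        {p : Set (Fin n) × Set (Fin n) | ∃ (i : ℕ) (h : i + 1 < n),
          p = ({(⟨i + 1, h⟩ : Fin n)}, {(⟨i, Nat.lt_of_succ_lt h⟩ : Fin n)})}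
        {p : Set (Fin n) × Set (Fin n) | ∃ (i : ℕ) (h : i + 1 < n),
          p = ({(⟨i, Nat.lt_of_succ_lt h⟩ : Fin n)}, {(⟨i + 1, h⟩ : Fin n)})} := by
  classical
  constructor
  · rintro ⟨M, b, hb⟩ n
    refine ⟨M, fun k => b k.val, ?_, ?_⟩
    · rintro p ⟨i, h, rfl⟩
      obtain ⟨a, ha1, ha2⟩ := (hb i (i + 1)).mpr (Nat.lt_succ_self i)
      exact ⟨a, fun k hk => by rw [Set.mem_singleton_iff] at hk; subst hk; exact ha1,
        fun k hk => by rw [Set.mem_singleton_iff] at hk; subst hk; exact ha2⟩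
    · rintro p ⟨i, h, rfl⟩ ⟨a, ha1, ha2⟩
      have := (hb (i + 1) i).mp
        ⟨a, ha1 _ (Set.mem_singleton _), ha2 _ (Set.mem_singleton _)⟩
      omega
  · intro h
    choose M bfun hC hI using h
    -- per-model parameters, extended to all of ℕ
    let B : ℕ → ∀ n, β → M n := fun i n =>
      if hin : i < n then bfun n ⟨i, hin⟩ else Classical.arbitrary _
    have hBeq : ∀ i n (hin : i < n), B i n = bfun n ⟨i, hin⟩ := fun i n hin => dif_pos hin
    -- monotonicity inside each model
    have mono : ∀ (n j i : ℕ), j ≤ i → i < n → ∀ a : α → M n,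
        φ.Realize (Sum.elim a (B j n)) → φ.Realize (Sum.elim a (B i n)) := by
      intro n j i hji
      induction i, hji using Nat.le_induction with
      | base => intro _ a ha; exact ha
      | succ i hji ih =>
        intro hin a ha
        by_contra hcon
        refine hI n (({⟨i, Nat.lt_of_succ_lt hin⟩}, {⟨i + 1, hin⟩}) : Set (Fin n) × Set (Fin n))
          ⟨i, hin, rfl⟩ ⟨a, ?_, ?_⟩
        · rintro k hk; rw [Set.mem_singleton_iff] at hk; subst hk
          rw [← hBeq i n (Nat.lt_of_succ_lt hin)]
          exact ih (Nat.lt_of_succ_lt hin) a ha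
        · rintro k hk; rw [Set.mem_singleton_iff] at hk; subst hk
          rw [← hBeq (i + 1) n hin]
          exact hcon
    -- strict existence inside each model
    have strict : ∀ (n i j : ℕ), i < j → j < n → ∃ a : α → M n,
        φ.Realize (Sum.elim a (B j n)) ∧ ¬ φ.Realize (Sum.elim a (B i n)) := by
      intro n i j hij hjn
      have hin : i + 1 < n := lt_of_le_of_lt hij hjn
      obtain ⟨a, ha1, ha2⟩ := hC n (({⟨i + 1, hin⟩}, {⟨i, Nat.lt_of_succ_lt hin⟩}) :
        Set (Fin n) × Set (Fin n)) ⟨i, hin, rfl⟩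
      refine ⟨a, ?_, ?_⟩
      · refine mono n (i + 1) j hij hjn a ?_
        rw [hBeq (i + 1) n hin]
        exact ha1 _ (Set.mem_singleton _)
      · rw [hBeq i n (Nat.lt_of_succ_lt hin)]
        exact ha2 _ (Set.mem_singleton _)
    -- the ultraproduct
    let uu : Ultrafilter ℕ := Filter.hyperfilter ℕ
    let Mc : ℕ → Type w := fun n => M n
    letI : ∀ n, L.Structure (Mc n) := fun n => inferInstanceAs (L.Structure (M n))
    letI : ∀ n, Nonempty (Mc n) := fun n => inferInstanceAs (Nonempty (M n))
    let N : Type w := (uu : Filter ℕ).Product Mc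
    haveI : N ⊨ T := by
      rw [Theory.model_iff]
      intro σ hσ
      rw [Ultraproduct.sentence_realize]
      exact Filter.Eventually.of_forall fun n =>
        (M n).is_model.realize_of_mem σ hσ
    refine ⟨Theory.ModelType.of T N, fun i y => (↑(fun n => B i n y) : N), ?_⟩
    intro i j
    have hcast : ∀ (i : ℕ) (A : α → ∀ n, Mc n),
        φ.Realize (Sum.elim (fun x => (↑(A x) : N)) (fun y => (↑(fun n => B i n y) : N))) ↔
          ∀ᶠ n in uu, φ.Realize (Sum.elim (fun x => A x n) (B i n)) := by
      intro i A
      exact elim_realize_cast φ uu A (fun y n => B i n y)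
    constructor
    · rintro ⟨a, haj, hai⟩
      by_contra hij
      push_neg at hij
      obtain ⟨A, hA⟩ : ∃ A : α → ∀ n, Mc n, ∀ x, a x = (↑(A x) : N) := by
        have := fun x => Quotient.exists_rep (a x)
        choose A hA using this
        exact ⟨A, fun x => (hA x).symm⟩
      have haeq : a = fun x => (↑(A x) : N) := funext hA
      rw [haeq] at haj hai
      replace haj := (hcast j A).mp haj
      replace hai : ¬ ∀ᶠ n in uu, φ.Realize (Sum.elim (fun x => A x n) (B i n)) :=
        fun h => hai ((hcast i A).mpr h)
      rw [← Ultrafilter.eventually_not] at hai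
      have hbig : ∀ᶠ n in uu, i < n :=
        (Filter.eventually_gt_atTop i).filter_mono Nat.hyperfilter_le_atTop
      obtain ⟨n, h1, h2, h3⟩ := (haj.and (hai.and hbig)).exists
      exact h2 (mono n j i hij h3 _ h1)
    · intro hij
      let A : α → ∀ n, Mc n := fun x n =>
        if hjn : j < n then (strict n i j hij hjn).choose x else Classical.arbitrary _
      have hA : ∀ n, j < n → φ.Realize (Sum.elim (fun x => A x n) (B j n)) ∧
          ¬ φ.Realize (Sum.elim (fun x => A x n) (B i n)) := by
        intro n hjn
        have hspec := (strict n i j hij hjn).choose_spec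
        have : (fun x => A x n) = (strict n i j hij hjn).choose := by
          funext x; exact dif_pos hjn
        rw [this]
        exact hspec
      have hbig : ∀ᶠ n in uu, j < n :=
        (Filter.eventually_gt_atTop j).filter_mono Nat.hyperfilter_le_atTop
      refine ⟨fun x => (↑(A x) : N), ?_, ?_⟩
      · refine (hcast j A).mpr ?_
        exact hbig.mono fun n hn => (hA n hn).1
      · refine mt (hcast i A).mp ?_
        rw [← Ultrafilter.eventually_not]
        · exact hbig.mono fun n hn => (hA n hn).2
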